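/- Suppose 0 < a < 1 and b < 1. Then the supremum of Rs(P1,P2) over all P1 ≥ 0 and P2 ≥ 0 equals (1/2)·log₂(1/(a·b)). -/

import Mathlib

/-- `g x = (1/2) * log_2 (1 + x)`. -/
noncomputable def g (x : ℝ) : ℝ := (1 / 2) * Real.logb 2 (1 + x)

/-- The achievable secrecy rate `Rs(P1, P2)` for the Gaussian wiretap channel with a
helping interferer, with channel gains `a`, `b` and powers `P1`, `P2`. -/
noncomputable def Rs (a b P1 P2 : ℝ) : ℝ :=
  if 1 + P2 ≤ a then 0
  else if 1 ≤ a then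
    -- case `1 ≤ a < 1 + P2`
    if 1 + P1 ≤ b then g P1 - g (a * P1 / (1 + P2))
    else if 1 ≤ b then max 0 (g (P1 + b * P2) - g (a * P1 + P2))
    else max 0 (g (P1 / (1 + b * P2)) - g (a * P1 / (1 + P2)))
  else
    -- case `a < 1`, with `β1 = (1+P1)/(1+a*P1)` and `β2 = a*(1+P1)/(1+a*P1+(1-a)*P2)`
    if 1 + P1 ≤ b then g P1 - g (a * P1 / (1 + P2))
    else if (1 + P1) / (1 + a * P1) ≤ b then g (P1 + b * P2) - g (a * P1 + P2)
    else if a * (1 + P1) / (1 + a * P1 + (1 - a) * P2) ≤ b then g P1 - g (a * P1)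
    else g (P1 / (1 + b * P2)) - g (a * P1 / (1 + P2))

/-- Key comparison lemma. -/
lemma key_le (a b u v : ℝ) (hab : 0 < a * b) (hu : 0 < u) (hv : 0 < v)
    (h : a * b * u ≤ v) :
    (1 / 2) * Real.logb 2 u - (1 / 2) * Real.logb 2 v
      ≤ (1 / 2) * Real.logb 2 (1 / (a * b)) := by
  rw [← mul_sub, ← Real.logb_div hu.ne' hv.ne']
  have hdiv : u / v ≤ 1 / (a * b) := by
    rw [div_le_div_iff₀ hv hab]
    nlinarith
  have h2 : Real.logb 2 (u / v) ≤ Real.logb 2 (1 / (a * b)) :=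
    Real.logb_le_logb_of_le (by norm_num) (by positivity) hdiv
  linarith

set_option maxHeartbeats 1000000 in
/-- If `0 < a < 1` and `0 < b < 1`, the supremum of `Rs(P1,P2)` over all `P1 ≥ 0`, `P2 ≥ 0`
equals `(1/2) log₂ (1/(a b))`. -/
theorem stmt4 (a b : ℝ) (ha0 : 0 < a) (ha : a < 1) (hb0 : 0 < b) (hb : b < 1) :
    IsLUB {r : ℝ | ∃ P1 P2 : ℝ, 0 ≤ P1 ∧ 0 ≤ P2 ∧ r = Rs a b P1 P2}
      ((1 / 2) * Real.logb 2 (1 / (a * b))) := by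
  have hab : 0 < a * b := mul_pos ha0 hb0
  constructor
  · rintro r ⟨P1, P2, hP1, hP2, rfl⟩
    unfold Rs
    rw [if_neg (by linarith), if_neg (by linarith), if_neg (by linarith)]
    have hd1 : (0:ℝ) < 1 + a * P1 := by nlinarith
    have hβ1 : ¬ ((1 + P1) / (1 + a * P1) ≤ b) := by
      have : (1:ℝ) ≤ (1 + P1) / (1 + a * P1) := (one_le_div hd1).2 (by nlinarith)
      linarith
    rw [if_neg hβ1]
    split_ifs with hβ2
    · -- `g P1 - g (a*P1)`
      simp only [g]
      exact key_le a b _ _ hab (by linarith) (by nlinarith) (by nlinarith)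
    · -- `g (P1/(1+b*P2)) - g (a*P1/(1+P2))`
      simp only [g]
      have hs : (0:ℝ) < 1 + b * P2 := by nlinarith
      have ht : (0:ℝ) < 1 + P2 := by linarith
      have hu : (0:ℝ) < 1 + P1 / (1 + b * P2) := by
        have := div_nonneg hP1 hs.le; linarith
      have hv : (0:ℝ) < 1 + a * P1 / (1 + P2) := by
        have := div_nonneg (mul_nonneg ha0.le hP1) ht.le; linarith
      apply key_le a b _ _ hab hu hv
      have e1 : 1 + P1 / (1 + b * P2) = (1 + b * P2 + P1) / (1 + b * P2) := by
        field_simp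
      have e2 : 1 + a * P1 / (1 + P2) = (1 + P2 + a * P1) / (1 + P2) := by
        field_simp
      rw [e1, e2, ← mul_div_assoc, div_le_div_iff₀ hs ht]
      have k1 : 0 ≤ (1 - a * b) * (1 + P2) := by nlinarith
      have k2 : 0 ≤ (1 - a * b) * (b * P2 * (1 + P2)) := by
        have : (0:ℝ) ≤ b * P2 * (1 + P2) := by positivity
        nlinarith
      have k3 : 0 ≤ a * (1 - b) * P1 := mul_nonneg (mul_nonneg ha0.le (by linarith)) hP1
      nlinarith [k1, k2, k3]
  · intro c hc
    have hab1 : a * b < 1 := by nlinarith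
    -- the rational function of x = 1/t
    have hψ : Filter.Tendsto
        (fun x : ℝ => ((x ^ 2 + b * x + 1) * (x + 1)) / ((x + b) * (x ^ 2 + x + a)))
        (nhds 0) (nhds (1 / (a * b))) := by
      have hcont : ContinuousAt
          (fun x : ℝ => ((x ^ 2 + b * x + 1) * (x + 1)) / ((x + b) * (x ^ 2 + x + a))) 0 := by
        apply ContinuousAt.div (by fun_prop) (by fun_prop)
        have : ((0:ℝ) + b) * ((0:ℝ) ^ 2 + 0 + a) ≠ 0 := by positivity
        simpa using this
      have := hcont.tendsto
      try simp only at this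
      convert this using 2
      norm_num [mul_comm]
    have hφ : Filter.Tendsto (fun t : ℝ => t⁻¹) Filter.atTop (nhds 0) :=
      tendsto_inv_atTop_zero
    have hQ : Filter.Tendsto
        (fun t : ℝ => (1 + t ^ 2 / (1 + b * t)) / (1 + a * t ^ 2 / (1 + t)))
        Filter.atTop (nhds (1 / (a * b))) := by
      apply (hψ.comp hφ).congr'
      filter_upwards [Filter.eventually_gt_atTop 0] with t ht
      have h1 : (0:ℝ) < 1 + b * t := by nlinarith
      have h2 : (0:ℝ) < 1 + t := by linarith
      simp only [Function.comp]
      rw [div_eq_div_iff]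
      · field_simp
      · positivity
      · positivity
    have hlog : Filter.Tendsto
        (fun t : ℝ => (1 / 2) * Real.logb 2
          ((1 + t ^ 2 / (1 + b * t)) / (1 + a * t ^ 2 / (1 + t))))
        Filter.atTop (nhds ((1 / 2) * Real.logb 2 (1 / (a * b)))) := by
      simp only [Real.logb]
      exact ((hQ.log (by positivity)).div_const (Real.log 2)).const_mul _
    apply le_of_tendsto hlog
    filter_upwards [Filter.eventually_ge_atTop (2 : ℝ),
      Filter.eventually_ge_atTop (2 / (a * (1 - b)))] with t h2t hTt
    have ht0 : (0:ℝ) < t := by linarith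
    have h1 : (0:ℝ) < 1 + b * t := by nlinarith
    have h2 : (0:ℝ) < 1 + t := by linarith
    have habt : 2 ≤ a * (1 - b) * t := by
      rw [div_le_iff₀ (by nlinarith)] at hTt
      linarith [hTt]
    have hu : (0:ℝ) < 1 + t ^ 2 / (1 + b * t) := by
      have := div_nonneg (sq_nonneg t) h1.le; linarith
    have hv : (0:ℝ) < 1 + a * t ^ 2 / (1 + t) := by
      have := div_nonneg (mul_nonneg ha0.le (sq_nonneg t)) h2.le; linarith
    have hRs : Rs a b (t ^ 2) t
        = (1 / 2) * Real.logb 2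
          ((1 + t ^ 2 / (1 + b * t)) / (1 + a * t ^ 2 / (1 + t))) := by
      unfold Rs
      have hd1 : (0:ℝ) < 1 + a * t ^ 2 := by nlinarith [sq_nonneg t]
      have hβ1 : ¬ ((1 + t ^ 2) / (1 + a * t ^ 2) ≤ b) := by
        have : (1:ℝ) ≤ (1 + t ^ 2) / (1 + a * t ^ 2) :=
          (one_le_div hd1).2 (by nlinarith [sq_nonneg t])
        linarith
      have hβ2 : ¬ (a * (1 + t ^ 2) / (1 + a * t ^ 2 + (1 - a) * t) ≤ b) := by
        have hD : (0:ℝ) < 1 + a * t ^ 2 + (1 - a) * t := by nlinarith [sq_nonneg t]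
        rw [div_le_iff₀ hD]
        push_neg
        have h5 : 2 * t ≤ a * (1 - b) * t ^ 2 := by
          nlinarith [mul_le_mul_of_nonneg_right habt ht0.le]
        have h7 : 0 ≤ (1 - b * (1 - a)) * t := by nlinarith
        nlinarith [h5, h7]
      rw [if_neg (show ¬(1 + t ≤ a) by linarith), if_neg (by linarith),
        if_neg (show ¬(1 + t ^ 2 ≤ b) by nlinarith [sq_nonneg t]), if_neg hβ1, if_neg hβ2]
      simp only [g]
      rw [Real.logb_div hu.ne' hv.ne']
      ring
    rw [← hRs]
    exact hc ⟨t ^ 2, t, sq_nonneg t, ht0.le, rfl⟩
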